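/- Let G and G' be two vertex-disjoint graphs, each with at least two vertices, let v be a vertex of G and v' a vertex of G', and let G'' be the graph obtained from the disjoint union of G and G' by adding the edge vv'. For a set S'' of vertices of G'': S'' is a type I set for v' in G'' with L_{S''}(v') = −1 if and only if S'' = S ∪ S' where S = S'' ∩ V(G) is a type I set for v in G, S' = S'' ∩ V(G') is a type I set for v' in G', and (L_S(v), L_{S'}(v')) = (1, −1). -/

import Mathlib

/-- A set of vertices is independent: no two of its vertices are adjacent. -/
def IndepSet {V : Type*} (G : SimpleGraph V) (S : Set V) : Prop :=
  ∀ u ∈ S, ∀ w ∈ S, ¬ G.Adj u w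

/-- `S` is a type I set for `v` in `G`: `S` is independent, every vertex
`u ∉ S ∪ {v}` has at least one and at most two neighbors in `S`, and `v` either
belongs to `S` or has at most two neighbors in `S`. -/
def TypeISet {V : Type*} (G : SimpleGraph V) (v : V) (S : Set V) : Prop :=
  IndepSet G S ∧
    (∀ u, u ∉ S → u ≠ v →
      1 ≤ (S ∩ G.neighborSet u).ncard ∧ (S ∩ G.neighborSet u).ncard ≤ 2) ∧
    (v ∈ S ∨ (S ∩ G.neighborSet v).ncard ≤ 2)

/-- The labeling `L_S(v) = l` : `0` if `v ∈ S`; `k ≥ 1` if `v ∉ S` and `v` has exactly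
`k` neighbors in `S`; `-1` if `N[v] ∩ S = ∅` and every neighbor of `v` has exactly one
neighbor in `S`; `-2` if `N[v] ∩ S = ∅` and some neighbor of `v` has exactly two
neighbors in `S`. -/
def HasLabel {V : Type*} (G : SimpleGraph V) (v : V) (S : Set V) (l : ℤ) : Prop :=
  (v ∈ S ∧ l = 0) ∨
  (v ∉ S ∧ ∃ k : ℕ, 1 ≤ k ∧ (S ∩ G.neighborSet v).ncard = k ∧ l = (k : ℤ)) ∨
  (v ∉ S ∧ S ∩ G.neighborSet v = ∅ ∧
    (∀ u ∈ G.neighborSet v, (S ∩ G.neighborSet u).ncard = 1) ∧ l = -1) ∨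
  (v ∉ S ∧ S ∩ G.neighborSet v = ∅ ∧
    (∃ u ∈ G.neighborSet v, (S ∩ G.neighborSet u).ncard = 2) ∧ l = -2)

/-- The star `K_{1,r}` with center `none` and the `r` leaves `some i`. -/
def starGraph (r : ℕ) : SimpleGraph (Option (Fin r)) where
  Adj a b := (a = none ∧ b ≠ none) ∨ (a ≠ none ∧ b = none)
  symm := by constructor; intro a b h; tauto
  loopless := by constructor; intro a h; tauto

/-- The graph obtained from `G` by adding a new vertex `none` adjacent only to `v`. -/
def addLeaf {V : Type*} (G : SimpleGraph V) (v : V) : SimpleGraph (Option V) where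
  Adj a b := match a, b with
    | some x, some y => G.Adj x y
    | none, some y => y = v
    | some x, none => x = v
    | none, none => False
  symm := by
    constructor; intro a b h
    match a, b with
    | some x, some y => exact h.symm
    | none, some y => exact h
    | some x, none => exact h
    | none, none => exact h
  loopless := by
    constructor; intro a h
    match a with
    | some x => exact G.irrefl h
    | none => exact h

/-- The graph obtained from the disjoint union of `G` and `H` by adding the edge
between `v` (in `G`) and `v'` (in `H`). -/
def joinAt {V W : Type*} (G : SimpleGraph V) (H : SimpleGraph W) (v : V) (v' : W) :
    SimpleGraph (V ⊕ W) where
  Adj a b := match a, b with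
    | Sum.inl x, Sum.inl y => G.Adj x y
    | Sum.inr x, Sum.inr y => H.Adj x y
    | Sum.inl x, Sum.inr y => x = v ∧ y = v'
    | Sum.inr x, Sum.inl y => x = v' ∧ y = v
  symm := by
    constructor; intro a b h
    match a, b with
    | Sum.inl x, Sum.inl y => exact h.symm
    | Sum.inr x, Sum.inr y => exact h.symm
    | Sum.inl x, Sum.inr y => exact ⟨h.2, h.1⟩
    | Sum.inr x, Sum.inl y => exact ⟨h.2, h.1⟩
  loopless := by
    constructor; intro a h
    match a with
    | Sum.inl x => exact G.irrefl h
    | Sum.inr x => exact H.irrefl h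

section Statement16Aux

variable {V W : Type*} {G : SimpleGraph V} {G' : SimpleGraph W} {v : V} {v' : W}

lemma joinAt_adj_ll {x y : V} :
    (joinAt G G' v v').Adj (Sum.inl x) (Sum.inl y) ↔ G.Adj x y := Iff.rfl
lemma joinAt_adj_rr {x y : W} :
    (joinAt G G' v v').Adj (Sum.inr x) (Sum.inr y) ↔ G'.Adj x y := Iff.rfl
lemma joinAt_adj_lr {x : V} {y : W} :
    (joinAt G G' v v').Adj (Sum.inl x) (Sum.inr y) ↔ x = v ∧ y = v' := Iff.rfl
lemma joinAt_adj_rl {x : W} {y : V} :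
    (joinAt G G' v v').Adj (Sum.inr x) (Sum.inl y) ↔ x = v' ∧ y = v := Iff.rfl

lemma inter_inl {S'' : Set (V ⊕ W)} (h : Sum.inr v' ∉ S'') (x : V) :
    S'' ∩ (joinAt G G' v v').neighborSet (Sum.inl x) =
      Sum.inl '' (Sum.inl ⁻¹' S'' ∩ G.neighborSet x) := by
  ext a
  cases a with
  | inl y =>
      simp only [Set.mem_inter_iff, SimpleGraph.mem_neighborSet, joinAt_adj_ll, Set.mem_image,
        Set.mem_preimage]
      constructor
      · rintro ⟨h1, h2⟩; exact ⟨y, ⟨h1, h2⟩, rfl⟩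
      · rintro ⟨z, hz, hzy⟩; cases hzy; exact hz
  | inr y =>
      simp only [Set.mem_inter_iff, SimpleGraph.mem_neighborSet, joinAt_adj_lr, Set.mem_image]
      constructor
      · rintro ⟨hy, -, rfl⟩; exact absurd hy h
      · rintro ⟨z, -, hz⟩; exact absurd hz (by simp)

lemma inter_inr_ne {S'' : Set (V ⊕ W)} {y : W} (hy : y ≠ v') :
    S'' ∩ (joinAt G G' v v').neighborSet (Sum.inr y) =
      Sum.inr '' (Sum.inr ⁻¹' S'' ∩ G'.neighborSet y) := by
  ext a
  cases a with
  | inr z =>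
      simp only [Set.mem_inter_iff, SimpleGraph.mem_neighborSet, joinAt_adj_rr, Set.mem_image,
        Set.mem_preimage]
      constructor
      · rintro ⟨h1, h2⟩; exact ⟨z, ⟨h1, h2⟩, rfl⟩
      · rintro ⟨w, hw, hwz⟩; cases hwz; exact hw
  | inl z =>
      simp only [Set.mem_inter_iff, SimpleGraph.mem_neighborSet, joinAt_adj_rl, Set.mem_image]
      constructor
      · rintro ⟨-, h1, -⟩; exact absurd h1 hy
      · rintro ⟨w, -, hw⟩; exact absurd hw (by simp)

lemma inter_inr_v' {S'' : Set (V ⊕ W)} (h : Sum.inl v ∉ S'') :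
    S'' ∩ (joinAt G G' v v').neighborSet (Sum.inr v') =
      Sum.inr '' (Sum.inr ⁻¹' S'' ∩ G'.neighborSet v') := by
  ext a
  cases a with
  | inr z =>
      simp only [Set.mem_inter_iff, SimpleGraph.mem_neighborSet, joinAt_adj_rr, Set.mem_image,
        Set.mem_preimage]
      constructor
      · rintro ⟨h1, h2⟩; exact ⟨z, ⟨h1, h2⟩, rfl⟩
      · rintro ⟨w, hw, hwz⟩; cases hwz; exact hw
  | inl z =>
      simp only [Set.mem_inter_iff, SimpleGraph.mem_neighborSet, joinAt_adj_rl, Set.mem_image]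
      constructor
      · rintro ⟨hz, -, rfl⟩; exact absurd hz h
      · rintro ⟨w, -, hw⟩; exact absurd hw (by simp)

lemma sum_set_decomp (S'' : Set (V ⊕ W)) :
    S'' = Sum.inl '' (Sum.inl ⁻¹' S'') ∪ Sum.inr '' (Sum.inr ⁻¹' S'') := by
  ext a
  cases a <;> simp

end Statement16Aux

theorem statement16 {V W : Type*} [Fintype V] [Fintype W] [Nontrivial V]
    [Nontrivial W] (G : SimpleGraph V) (G' : SimpleGraph W) (v : V) (v' : W)
    (S'' : Set (V ⊕ W)) :
    (TypeISet (joinAt G G' v v') (Sum.inr v') S'' ∧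
        HasLabel (joinAt G G' v v') (Sum.inr v') S'' (-1)) ↔
      ∃ (S : Set V) (S' : Set W), S = Sum.inl ⁻¹' S'' ∧ S' = Sum.inr ⁻¹' S'' ∧
        S'' = Sum.inl '' S ∪ Sum.inr '' S' ∧ TypeISet G v S ∧ TypeISet G' v' S' ∧
        HasLabel G v S 1 ∧ HasLabel G' v' S' (-1) := by
  constructor
  · rintro ⟨⟨hInd, hDom, -⟩, hL⟩
    obtain ⟨hnv', hE, h1⟩ :
        Sum.inr v' ∉ S'' ∧
        S'' ∩ (joinAt G G' v v').neighborSet (Sum.inr v') = ∅ ∧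
        ∀ u ∈ (joinAt G G' v v').neighborSet (Sum.inr v'),
          (S'' ∩ (joinAt G G' v v').neighborSet u).ncard = 1 := by
      rcases hL with ⟨-, h0⟩ | ⟨-, k, hk, -, hkl⟩ | ⟨ha, hb, hc, -⟩ | ⟨-, -, -, h2⟩
      · omega
      · omega
      · exact ⟨ha, hb, hc⟩
      · omega
    have hvmem : Sum.inl v ∈ (joinAt G G' v v').neighborSet (Sum.inr v') := ⟨rfl, rfl⟩
    have hnlv : Sum.inl v ∉ S'' := fun h =>
      Set.eq_empty_iff_forall_notMem.mp hE _ ⟨h, hvmem⟩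
    have hcv : (Sum.inl ⁻¹' S'' ∩ G.neighborSet v).ncard = 1 := by
      have := h1 (Sum.inl v) hvmem
      rwa [inter_inl hnv', Set.ncard_image_of_injective _ Sum.inl_injective] at this
    have hE' : Sum.inr ⁻¹' S'' ∩ G'.neighborSet v' = ∅ := by
      have := hE
      rw [inter_inr_v' hnlv] at this
      exact Set.image_eq_empty.mp this
    have hcu : ∀ u ∈ G'.neighborSet v', (Sum.inr ⁻¹' S'' ∩ G'.neighborSet u).ncard = 1 := by
      intro u hu
      have hmem : Sum.inr u ∈ (joinAt G G' v v').neighborSet (Sum.inr v') := hu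
      have := h1 (Sum.inr u) hmem
      rwa [inter_inr_ne (G'.ne_of_adj hu).symm,
        Set.ncard_image_of_injective _ Sum.inr_injective] at this
    refine ⟨Sum.inl ⁻¹' S'', Sum.inr ⁻¹' S'', rfl, rfl, sum_set_decomp S'', ?_, ?_, ?_, ?_⟩
    · refine ⟨fun u hu w hw hadj => hInd (Sum.inl u) hu (Sum.inl w) hw hadj, ?_, ?_⟩
      · intro u huS huv
        have := hDom (Sum.inl u) huS (by simp)
        rwa [inter_inl hnv', Set.ncard_image_of_injective _ Sum.inl_injective] at this
      · right; rw [hcv]; omega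
    · refine ⟨fun u hu w hw hadj => hInd (Sum.inr u) hu (Sum.inr w) hw hadj, ?_, ?_⟩
      · intro u huS huv
        have := hDom (Sum.inr u) huS (by simpa using huv)
        rwa [inter_inr_ne huv, Set.ncard_image_of_injective _ Sum.inr_injective] at this
      · right; rw [hE']; simp
    · exact Or.inr (Or.inl ⟨hnlv, 1, le_refl 1, hcv, rfl⟩)
    · exact Or.inr (Or.inr (Or.inl ⟨hnv', hE', hcu, rfl⟩))
  · rintro ⟨S, S', rfl, rfl, -, ⟨hIS, hDS, -⟩, ⟨hIS', hDS', -⟩, hL1, hLm1⟩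
    obtain ⟨hvS, hcv⟩ : Sum.inl v ∉ S'' ∧ (Sum.inl ⁻¹' S'' ∩ G.neighborSet v).ncard = 1 := by
      rcases hL1 with ⟨-, h0⟩ | ⟨ha, k, hk, hc, hkl⟩ | ⟨-, -, -, h2⟩ | ⟨-, -, -, h2⟩
      · omega
      · have : k = 1 := by omega
        exact ⟨ha, by rw [hc, this]⟩
      · omega
      · omega
    obtain ⟨hnv', hE', hcu⟩ : Sum.inr v' ∉ S'' ∧ Sum.inr ⁻¹' S'' ∩ G'.neighborSet v' = ∅ ∧
        ∀ u ∈ G'.neighborSet v', (Sum.inr ⁻¹' S'' ∩ G'.neighborSet u).ncard = 1 := by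
      rcases hLm1 with ⟨-, h0⟩ | ⟨-, k, hk, -, hkl⟩ | ⟨ha, hb, hc, -⟩ | ⟨-, -, -, h2⟩
      · omega
      · omega
      · exact ⟨ha, hb, hc⟩
      · omega
    refine ⟨⟨?_, ?_, ?_⟩, ?_⟩
    · intro a ha b hb hadj
      match a, b with
      | Sum.inl x, Sum.inl y => exact hIS x ha y hb hadj
      | Sum.inr x, Sum.inr y => exact hIS' x ha y hb hadj
      | Sum.inl x, Sum.inr y =>
          obtain ⟨rfl, rfl⟩ := hadj; exact hvS ha
      | Sum.inr x, Sum.inl y =>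
          obtain ⟨rfl, rfl⟩ := hadj; exact hnv' ha
    · intro u hu hne
      match u with
      | Sum.inl x =>
          rw [inter_inl hnv', Set.ncard_image_of_injective _ Sum.inl_injective]
          by_cases hx : x = v
          · subst hx; rw [hcv]; omega
          · exact hDS x hu hx
      | Sum.inr y =>
          have hy : y ≠ v' := fun h => hne (by rw [h])
          rw [inter_inr_ne hy, Set.ncard_image_of_injective _ Sum.inr_injective]
          exact hDS' y hu hy
    · right
      rw [inter_inr_v' hvS, hE']
      simp
    · refine Or.inr (Or.inr (Or.inl ⟨hnv', by rw [inter_inr_v' hvS, hE']; simp, ?_, rfl⟩))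
      intro u hu
      match u with
      | Sum.inl z =>
          obtain ⟨-, rfl⟩ : v' = v' ∧ z = v := hu
          rw [inter_inl hnv', Set.ncard_image_of_injective _ Sum.inl_injective]
          exact hcv
      | Sum.inr z =>
          have hz : G'.Adj v' z := hu
          rw [inter_inr_ne (G'.ne_of_adj hz).symm,
            Set.ncard_image_of_injective _ Sum.inr_injective]
          exact hcu z hz
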